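/- Let f : ℝᴰ → ℝ be continuous, monotone along every line, and suppose f is not constant. Then the set P of vectors v with lim_{λ→∞} f(λv) = sup_λ f(λv) > inf_λ f(λv) is open, the set N of vectors with lim_{λ→−∞} f(λv) = sup_λ f(λv) > inf_λ f(λv) is open, P and N are disjoint, and P = −N. -/

import Mathlib

open Filter

/-- Properties of the sets `P` and `N` used in the proofs of Lemmas 1 and 4. -/
theorem stmt13 (D : ℕ) (f : (Fin D → ℝ) → ℝ)
    (hcont : Continuous f)
    (hrange : ∀ x, f x ∈ Set.Icc (0 : ℝ) 1)
    (hmono : ∀ v w : Fin D → ℝ,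
      Monotone (fun t : ℝ => f (w + t • v)) ∨ Antitone (fun t : ℝ => f (w + t • v)))
    (hnc : ¬ ∀ x y : Fin D → ℝ, f x = f y) :
    IsOpen {v : Fin D → ℝ |
        Tendsto (fun t : ℝ => f (t • v)) atTop (nhds (⨆ t : ℝ, f (t • v))) ∧
        (⨅ t : ℝ, f (t • v)) < ⨆ t : ℝ, f (t • v)} ∧
    IsOpen {v : Fin D → ℝ |
        Tendsto (fun t : ℝ => f (t • v)) atBot (nhds (⨆ t : ℝ, f (t • v))) ∧
        (⨅ t : ℝ, f (t • v)) < ⨆ t : ℝ, f (t • v)} ∧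
    {v : Fin D → ℝ |
        Tendsto (fun t : ℝ => f (t • v)) atTop (nhds (⨆ t : ℝ, f (t • v))) ∧
        (⨅ t : ℝ, f (t • v)) < ⨆ t : ℝ, f (t • v)} ∩
      {v : Fin D → ℝ |
        Tendsto (fun t : ℝ => f (t • v)) atBot (nhds (⨆ t : ℝ, f (t • v))) ∧
        (⨅ t : ℝ, f (t • v)) < ⨆ t : ℝ, f (t • v)} = ∅ ∧
    {v : Fin D → ℝ |
        Tendsto (fun t : ℝ => f (t • v)) atTop (nhds (⨆ t : ℝ, f (t • v))) ∧
        (⨅ t : ℝ, f (t • v)) < ⨆ t : ℝ, f (t • v)} =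
      -{v : Fin D → ℝ |
        Tendsto (fun t : ℝ => f (t • v)) atBot (nhds (⨆ t : ℝ, f (t • v))) ∧
        (⨅ t : ℝ, f (t • v)) < ⨆ t : ℝ, f (t • v)} := by
  have hbdA : ∀ v : Fin D → ℝ, BddAbove (Set.range fun t : ℝ => f (t • v)) := by
    rintro v
    exact ⟨1, by rintro x ⟨t, rfl⟩; exact (hrange _).2⟩
  have hbdB : ∀ v : Fin D → ℝ, BddBelow (Set.range fun t : ℝ => f (t • v)) := by
    rintro v
    exact ⟨0, by rintro x ⟨t, rfl⟩; exact (hrange _).1⟩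
  have hmono0 : ∀ v : Fin D → ℝ,
      Monotone (fun t : ℝ => f (t • v)) ∨ Antitone (fun t : ℝ => f (t • v)) := by
    intro v
    have := hmono v 0
    simpa using this
  -- characterization of P
  have hP : ∀ v : Fin D → ℝ,
      (Tendsto (fun t : ℝ => f (t • v)) atTop (nhds (⨆ t : ℝ, f (t • v))) ∧
        (⨅ t : ℝ, f (t • v)) < ⨆ t : ℝ, f (t • v)) ↔
      ∃ s t : ℝ, s < t ∧ f (s • v) < f (t • v) := by
    intro v
    constructor
    · rintro ⟨htend, hlt⟩
      rcases hmono0 v with hm | ha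
      · by_contra hno
        push_neg at hno
        have hconst : ∀ t : ℝ, f (t • v) = f ((0 : ℝ) • v) := by
          intro t
          rcases lt_trichotomy t 0 with h | h | h
          · exact le_antisymm (hm h.le) (hno t 0 h)
          · rw [h]
          · exact le_antisymm (hno 0 t h) (hm h.le)
        have h1 : (⨆ t : ℝ, f (t • v)) = f ((0 : ℝ) • v) := by
          rw [show (fun t : ℝ => f (t • v)) = fun _ : ℝ => f ((0:ℝ) • v) from funext hconst] at *
          exact ciSup_const
        have h2 : (⨅ t : ℝ, f (t • v)) = f ((0 : ℝ) • v) := by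
          rw [show (fun t : ℝ => f (t • v)) = fun _ : ℝ => f ((0:ℝ) • v) from funext hconst] at *
          exact ciInf_const
        rw [h1, h2] at hlt
        exact lt_irrefl _ hlt
      · have h2 := tendsto_atTop_ciInf ha (hbdB v)
        have := tendsto_nhds_unique htend h2
        rw [this] at hlt
        exact absurd hlt (lt_irrefl _)
    · rintro ⟨s, t, hst, hf⟩
      rcases hmono0 v with hm | ha
      · refine ⟨tendsto_atTop_ciSup hm (hbdA v), ?_⟩
        calc (⨅ t : ℝ, f (t • v)) ≤ f (s • v) := ciInf_le (hbdB v) s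
          _ < f (t • v) := hf
          _ ≤ ⨆ t : ℝ, f (t • v) := le_ciSup (hbdA v) t
      · exact absurd hf (not_lt.2 (ha hst.le))
  -- characterization of N
  have hN : ∀ v : Fin D → ℝ,
      (Tendsto (fun t : ℝ => f (t • v)) atBot (nhds (⨆ t : ℝ, f (t • v))) ∧
        (⨅ t : ℝ, f (t • v)) < ⨆ t : ℝ, f (t • v)) ↔
      ∃ s t : ℝ, s < t ∧ f (t • v) < f (s • v) := by
    intro v
    constructor
    · rintro ⟨htend, hlt⟩
      rcases hmono0 v with hm | ha
      · have h2 := tendsto_atBot_ciInf hm (hbdB v)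
        have := tendsto_nhds_unique htend h2
        rw [this] at hlt
        exact absurd hlt (lt_irrefl _)
      · by_contra hno
        push_neg at hno
        have hconst : ∀ t : ℝ, f (t • v) = f ((0 : ℝ) • v) := by
          intro t
          rcases lt_trichotomy t 0 with h | h | h
          · exact le_antisymm (hno t 0 h) (ha h.le)
          · rw [h]
          · exact le_antisymm (ha h.le) (hno 0 t h)
        have h1 : (⨆ t : ℝ, f (t • v)) = f ((0 : ℝ) • v) := by
          rw [show (fun t : ℝ => f (t • v)) = fun _ : ℝ => f ((0:ℝ) • v) from funext hconst] at *
          exact ciSup_const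
        have h2 : (⨅ t : ℝ, f (t • v)) = f ((0 : ℝ) • v) := by
          rw [show (fun t : ℝ => f (t • v)) = fun _ : ℝ => f ((0:ℝ) • v) from funext hconst] at *
          exact ciInf_const
        rw [h1, h2] at hlt
        exact lt_irrefl _ hlt
    · rintro ⟨s, t, hst, hf⟩
      rcases hmono0 v with hm | ha
      · exact absurd hf (not_lt.2 (hm hst.le))
      · refine ⟨tendsto_atBot_ciSup ha (hbdA v), ?_⟩
        calc (⨅ t : ℝ, f (t • v)) ≤ f (t • v) := ciInf_le (hbdB v) t
          _ < f (s • v) := hf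
          _ ≤ ⨆ t : ℝ, f (t • v) := le_ciSup (hbdA v) s
  refine ⟨?_, ?_, ?_, ?_⟩
  · have : {v : Fin D → ℝ |
        Tendsto (fun t : ℝ => f (t • v)) atTop (nhds (⨆ t : ℝ, f (t • v))) ∧
        (⨅ t : ℝ, f (t • v)) < ⨆ t : ℝ, f (t • v)} =
        ⋃ (p : ℝ × ℝ) (_ : p.1 < p.2), {v : Fin D → ℝ | f (p.1 • v) < f (p.2 • v)} := by
      ext v
      simp only [Set.mem_setOf_eq, Set.mem_iUnion, hP v]
      exact ⟨fun ⟨s, t, h1, h2⟩ => ⟨(s, t), h1, h2⟩, fun ⟨p, h1, h2⟩ => ⟨p.1, p.2, h1, h2⟩⟩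
    rw [this]
    refine isOpen_iUnion fun p => isOpen_iUnion fun _ => ?_
    exact isOpen_lt (hcont.comp (continuous_const_smul _))
      (hcont.comp (continuous_const_smul _))
  · have : {v : Fin D → ℝ |
        Tendsto (fun t : ℝ => f (t • v)) atBot (nhds (⨆ t : ℝ, f (t • v))) ∧
        (⨅ t : ℝ, f (t • v)) < ⨆ t : ℝ, f (t • v)} =
        ⋃ (p : ℝ × ℝ) (_ : p.1 < p.2), {v : Fin D → ℝ | f (p.2 • v) < f (p.1 • v)} := by
      ext v
      simp only [Set.mem_setOf_eq, Set.mem_iUnion, hN v]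
      exact ⟨fun ⟨s, t, h1, h2⟩ => ⟨(s, t), h1, h2⟩, fun ⟨p, h1, h2⟩ => ⟨p.1, p.2, h1, h2⟩⟩
    rw [this]
    refine isOpen_iUnion fun p => isOpen_iUnion fun _ => ?_
    exact isOpen_lt (hcont.comp (continuous_const_smul _))
      (hcont.comp (continuous_const_smul _))
  · ext v
    simp only [Set.mem_inter_iff, Set.mem_empty_iff_false, iff_false, not_and]
    intro hv1 hv2
    rcases (hP v).1 hv1 with ⟨s, t, hst, h1⟩
    rcases (hN v).1 hv2 with ⟨s', t', hst', h2⟩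
    rcases hmono0 v with hm | ha
    · exact absurd h2 (not_lt.2 (hm hst'.le))
    · exact absurd h1 (not_lt.2 (ha hst.le))
  · ext v
    simp only [Set.mem_neg, Set.mem_setOf_eq]
    rw [show (Tendsto (fun t : ℝ => f (t • v)) atTop (nhds (⨆ t : ℝ, f (t • v))) ∧
        (⨅ t : ℝ, f (t • v)) < ⨆ t : ℝ, f (t • v)) ↔ _ from hP v,
      show (Tendsto (fun t : ℝ => f (t • -v)) atBot (nhds (⨆ t : ℝ, f (t • -v))) ∧
        (⨅ t : ℝ, f (t • -v)) < ⨆ t : ℝ, f (t • -v)) ↔ _ from hN (-v)]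
    constructor
    · rintro ⟨s, t, hst, h⟩
      refine ⟨-t, -s, by linarith, ?_⟩
      simpa [smul_neg, neg_smul, neg_neg] using h
    · rintro ⟨s, t, hst, h⟩
      refine ⟨-t, -s, by linarith, ?_⟩
      simpa [smul_neg, neg_smul, neg_neg] using h
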